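/- Let 𝔠 > 0 and let Λ be a Lorentz transformation. Then there exists a constant c > 0, depending only on Λ (and 𝔠), such that for all p, q ∈ ℝ³, writing P = (√(𝔠²+|p|²), p), Q = (√(𝔠²+|q|²), q), and p̃, q̃ ∈ ℝ³ for the spatial parts of ΛP and ΛQ respectively, one has (1/c)·|p − q| ≤ |p̃ − q̃| ≤ c·|p − q|. -/

import Mathlib

open Matrix

/-- The Minkowski matrix D = diag(1, -1, -1, -1). -/
noncomputable def minkD : Matrix (Fin 4) (Fin 4) ℝ := Matrix.diagonal ![1, -1, -1, -1]

/-- A real 4×4 matrix Λ is a Lorentz transformation if ΛᵀDΛ = D. -/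
def IsLorentz (Λ : Matrix (Fin 4) (Fin 4) ℝ) : Prop := Λᵀ * minkD * Λ = minkD

/-- The Euclidean norm on ℝ³. -/
noncomputable def norm3 (p : Fin 3 → ℝ) : ℝ := Real.sqrt (p 0 ^ 2 + p 1 ^ 2 + p 2 ^ 2)

/-- The mass-shell four-vector P = (√(c²+|p|²), p). -/
noncomputable def shell (c : ℝ) (p : Fin 3 → ℝ) : Fin 4 → ℝ :=
  Fin.cons (Real.sqrt (c ^ 2 + norm3 p ^ 2)) p

namespace LorentzAux

/-- The Minkowski bilinear form. -/
def mink (X Y : Fin 4 → ℝ) : ℝ := X 0 * Y 0 - X 1 * Y 1 - X 2 * Y 2 - X 3 * Y 3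

lemma norm3_nonneg (p : Fin 3 → ℝ) : 0 ≤ norm3 p := Real.sqrt_nonneg _

lemma norm3_sq (p : Fin 3 → ℝ) : norm3 p ^ 2 = p 0 ^ 2 + p 1 ^ 2 + p 2 ^ 2 :=
  Real.sq_sqrt (by positivity)

lemma norm3_eq (p : Fin 3 → ℝ) : norm3 p = ‖(WithLp.equiv 2 (Fin 3 → ℝ)).symm p‖ := by
  rw [EuclideanSpace.norm_eq]
  simp [norm3, Fin.sum_univ_three, Real.norm_eq_abs, sq_abs]

lemma norm3_sub_norm3 (p q : Fin 3 → ℝ) : |norm3 p - norm3 q| ≤ norm3 (p - q) := by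
  rw [norm3_eq, norm3_eq, norm3_eq]
  exact abs_norm_sub_norm_le _ _

lemma abs_comp_le (v : Fin 3 → ℝ) (i : Fin 3) : |v i| ≤ norm3 v := by
  rw [← Real.sqrt_sq_eq_abs, norm3]
  apply Real.sqrt_le_sqrt
  fin_cases i
  · show v 0 ^ 2 ≤ _; nlinarith [sq_nonneg (v 1), sq_nonneg (v 2)]
  · show v 1 ^ 2 ≤ _; nlinarith [sq_nonneg (v 0), sq_nonneg (v 2)]
  · show v 2 ^ 2 ≤ _; nlinarith [sq_nonneg (v 0), sq_nonneg (v 1)]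

lemma norm3_le_sum (v : Fin 3 → ℝ) : norm3 v ≤ |v 0| + |v 1| + |v 2| := by
  rw [norm3, show |v 0| + |v 1| + |v 2| = Real.sqrt ((|v 0| + |v 1| + |v 2|)^2) from
    (Real.sqrt_sq (by positivity)).symm]
  apply Real.sqrt_le_sqrt
  nlinarith [sq_abs (v 0), sq_abs (v 1), sq_abs (v 2),
    mul_nonneg (abs_nonneg (v 0)) (abs_nonneg (v 1)),
    mul_nonneg (abs_nonneg (v 0)) (abs_nonneg (v 2)),
    mul_nonneg (abs_nonneg (v 1)) (abs_nonneg (v 2))]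

lemma sqrt_lip (c a b : ℝ) (ha : 0 ≤ a) (hb : 0 ≤ b) :
    |Real.sqrt (c^2 + a^2) - Real.sqrt (c^2 + b^2)| ≤ |a - b| := by
  set u := Real.sqrt (c^2 + a^2) with hu
  set v := Real.sqrt (c^2 + b^2) with hv
  have hu2 : u^2 = c^2 + a^2 := Real.sq_sqrt (by positivity)
  have hv2 : v^2 = c^2 + b^2 := Real.sq_sqrt (by positivity)
  have hua : a ≤ u := (Real.le_sqrt ha (by positivity)).mpr (by nlinarith [sq_nonneg c])
  have hvb : b ≤ v := (Real.le_sqrt hb (by positivity)).mpr (by nlinarith [sq_nonneg c])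
  have h1 : (u - v)^2 ≤ (a - b)^2 := by
    nlinarith [sq_nonneg (u*v - c^2 - a*b), mul_nonneg (le_trans ha hua) (le_trans hb hvb),
      mul_nonneg ha hb]
  exact sq_le_sq.mp h1

lemma dot_minkD (X Y : Fin 4 → ℝ) : X ⬝ᵥ minkD.mulVec Y = mink X Y := by
  simp [minkD, dotProduct, mulVec_diagonal, Fin.sum_univ_four, mink]
  ring

lemma mink_mulVec {Λ : Matrix (Fin 4) (Fin 4) ℝ} (hΛ : IsLorentz Λ) (X Y : Fin 4 → ℝ) :
    mink (Λ.mulVec X) (Λ.mulVec Y) = mink X Y := by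
  rw [← dot_minkD, ← dot_minkD, mulVec_mulVec, dotProduct_mulVec, ← vecMul_transpose,
    vecMul_vecMul, ← mul_assoc, show Λᵀ * minkD * Λ = minkD from hΛ, ← dotProduct_mulVec]

lemma detD : minkD.det = -1 := by
  simp [minkD, det_diagonal, Fin.prod_univ_four]

lemma det_ne_zero {Λ : Matrix (Fin 4) (Fin 4) ℝ} (hΛ : IsLorentz Λ) : Λ.det ≠ 0 := by
  have h := congrArg Matrix.det hΛ
  rw [det_mul, det_mul, det_transpose, detD] at h
  intro h0; rw [h0] at h; norm_num at h

lemma isLorentz_inv {Λ : Matrix (Fin 4) (Fin 4) ℝ} (hΛ : IsLorentz Λ) : IsLorentz Λ⁻¹ := by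
  have hd := det_ne_zero hΛ
  have h1 : Λ * Λ⁻¹ = 1 := mul_nonsing_inv Λ (isUnit_iff_ne_zero.mpr hd)
  unfold IsLorentz at hΛ ⊢
  rw [transpose_nonsing_inv]
  calc Λᵀ⁻¹ * minkD * Λ⁻¹ = Λᵀ⁻¹ * (Λᵀ * minkD * Λ) * Λ⁻¹ := by rw [hΛ]
    _ = Λᵀ⁻¹ * Λᵀ * minkD * (Λ * Λ⁻¹) := by simp only [mul_assoc]
    _ = minkD := by
        rw [nonsing_inv_mul _ (by rw [isUnit_iff_ne_zero, det_transpose]; exact hd), h1,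
          one_mul, mul_one]

/-- Time reversal matrix. -/
noncomputable def Tm : Matrix (Fin 4) (Fin 4) ℝ := Matrix.diagonal ![-1, 1, 1, 1]

lemma Tm_lorentz_mul {Λ : Matrix (Fin 4) (Fin 4) ℝ} (hΛ : IsLorentz Λ) : IsLorentz (Tm * Λ) := by
  have hT : Tmᵀ * minkD * Tm = minkD := by
    ext i k
    fin_cases i <;> fin_cases k <;>
      simp [Tm, minkD, Matrix.mul_apply, Fin.sum_univ_four, Matrix.diagonal]
  unfold IsLorentz at hΛ ⊢
  calc (Tm * Λ)ᵀ * minkD * (Tm * Λ) = Λᵀ * (Tmᵀ * minkD * Tm) * Λ := by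
        rw [transpose_mul]; simp only [mul_assoc]
    _ = minkD := by rw [hT, hΛ]

lemma Tm_mulVec_zero (v : Fin 4 → ℝ) : Tm.mulVec v 0 = - v 0 := by
  simp [Tm, mulVec_diagonal]

lemma Tm_mulVec_succ (v : Fin 4 → ℝ) (j : Fin 3) : Tm.mulVec v j.succ = v j.succ := by
  rw [Tm, mulVec_diagonal]
  fin_cases j <;> norm_num <;> exact one_mul _

lemma shell_zero_sq (c : ℝ) (p : Fin 3 → ℝ) :
    shell c p 0 ^ 2 = c ^ 2 + norm3 p ^ 2 := Real.sq_sqrt (by positivity)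

lemma shell_zero_pos {c : ℝ} (hc : 0 < c) (p : Fin 3 → ℝ) : 0 < shell c p 0 :=
  Real.sqrt_pos.mpr (by positivity)

lemma mink_shell_self (c : ℝ) (p : Fin 3 → ℝ) :
    mink (shell c p) (shell c p) = c ^ 2 := by
  show shell c p 0 * shell c p 0 - p 0 * p 0 - p 1 * p 1 - p 2 * p 2 = c ^ 2
  have h := shell_zero_sq c p
  have h2 := norm3_sq p
  nlinarith [h, h2]

lemma cs3 (p q : Fin 3 → ℝ) :
    (p 0 * q 0 + p 1 * q 1 + p 2 * q 2)^2 ≤ (norm3 p * norm3 q)^2 := by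
  have hp := norm3_sq p; have hq := norm3_sq q
  have h : (norm3 p * norm3 q)^2 = (p 0^2+p 1^2+p 2^2)*(q 0^2+q 1^2+q 2^2) := by
    rw [mul_pow, hp, hq]
  rw [h]
  nlinarith [sq_nonneg (p 0 * q 1 - p 1 * q 0), sq_nonneg (p 0 * q 2 - p 2 * q 0),
    sq_nonneg (p 1 * q 2 - p 2 * q 1)]

lemma mink_shell_pos {c : ℝ} (hc : 0 < c) (p q : Fin 3 → ℝ) :
    0 < mink (shell c p) (shell c q) := by
  show 0 < shell c p 0 * shell c q 0 - p 0 * q 0 - p 1 * q 1 - p 2 * q 2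
  have hp0 := shell_zero_pos hc p
  have hq0 := shell_zero_pos hc q
  have hps := shell_zero_sq c p
  have hqs := shell_zero_sq c q
  have hcs := cs3 p q
  have hnp := norm3_nonneg p
  have hnq := norm3_nonneg q
  have h2 : (shell c p 0 * shell c q 0)^2 = (c^2 + norm3 p ^2) * (c^2 + norm3 q ^2) := by
    rw [mul_pow, hps, hqs]
  have h3 : (c^2 + norm3 p * norm3 q)^2 ≤ (shell c p 0 * shell c q 0)^2 := by
    nlinarith [sq_nonneg (norm3 p - norm3 q), pow_pos hc 2]
  have h4 : c^2 + norm3 p * norm3 q ≤ shell c p 0 * shell c q 0 :=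
    le_of_sq_le_sq h3 (le_of_lt (mul_pos hp0 hq0))
  have h5 : |p 0 * q 0 + p 1 * q 1 + p 2 * q 2| ≤ norm3 p * norm3 q :=
    abs_le_of_sq_le_sq hcs (mul_nonneg hnp hnq)
  have h6 := le_abs_self (p 0 * q 0 + p 1 * q 1 + p 2 * q 2)
  nlinarith [pow_pos hc 2]

lemma time_sign {c : ℝ} (x y : Fin 4 → ℝ)
    (hc : 0 < c)
    (hx : mink x x = c ^ 2) (hy : mink y y = c ^ 2) (hxy : 0 < mink x y) :
    0 < x 0 * y 0 := by
  unfold mink at hx hy hxy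
  nlinarith [sq_nonneg (x 1 * y 2 - x 2 * y 1), sq_nonneg (x 1 * y 3 - x 3 * y 1),
    sq_nonneg (x 2 * y 3 - x 3 * y 2), sq_nonneg (x 0 * y 0 - x 1 * y 1 - x 2 * y 2 - x 3 * y 3),
    sq_nonneg (x 0 * y 0 + x 1 * y 1 + x 2 * y 2 + x 3 * y 3), sq_nonneg c, sq_nonneg (x 0 * y 0)]

/-- If the time component of ΛP is positive then ΛP is itself a mass-shell vector. -/
lemma eq_shell_of_pos {c : ℝ} (hc : 0 < c) {Λ : Matrix (Fin 4) (Fin 4) ℝ}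
    (hΛ : IsLorentz Λ) (p : Fin 3 → ℝ) (h : 0 < Λ.mulVec (shell c p) 0) :
    Λ.mulVec (shell c p) = shell c (fun j => Λ.mulVec (shell c p) j.succ) := by
  set v := Λ.mulVec (shell c p) with hv
  have hm : mink v v = c ^ 2 := by
    rw [hv, mink_mulVec hΛ]; exact mink_shell_self c p
  set w : Fin 3 → ℝ := fun j => v j.succ with hw
  have hw2 : norm3 w ^ 2 = v 1 ^ 2 + v 2 ^ 2 + v 3 ^ 2 := by
    rw [norm3_sq]; rfl
  have hv0 : v 0 ^ 2 = c ^ 2 + norm3 w ^ 2 := by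
    unfold mink at hm; rw [hw2]; nlinarith [hm]
  funext i
  refine Fin.cases ?_ ?_ i
  · show v 0 = Real.sqrt (c ^ 2 + norm3 w ^ 2)
    rw [← hv0, Real.sqrt_sq h.le]
  · intro j
    exact (show shell c w j.succ = w j from Fin.cons_succ _ _ _).symm

/-- Uniform Lipschitz upper bound for the spatial part of A applied to shell vectors. -/
lemma upper (c : ℝ) (hc : 0 < c) (A : Matrix (Fin 4) (Fin 4) ℝ) :
    ∃ K, 0 ≤ K ∧ ∀ p q : Fin 3 → ℝ,
      norm3 (fun j => A.mulVec (shell c p) j.succ - A.mulVec (shell c q) j.succ)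
        ≤ K * norm3 (p - q) := by
  refine ⟨∑ j : Fin 3, ∑ k : Fin 4, |A j.succ k|, by positivity, fun p q => ?_⟩
  set n := norm3 (p - q) with hn
  have hn0 : 0 ≤ n := norm3_nonneg _
  have hcomp : ∀ k : Fin 4, |shell c p k - shell c q k| ≤ n := by
    intro k
    refine Fin.cases ?_ ?_ k
    · have h1 := sqrt_lip c (norm3 p) (norm3 q) (norm3_nonneg p) (norm3_nonneg q)
      have h2 := norm3_sub_norm3 p q
      calc |shell c p 0 - shell c q 0| ≤ |norm3 p - norm3 q| := h1
        _ ≤ n := h2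
    · intro i
      have h : shell c p i.succ - shell c q i.succ = (p - q) i := by
        rw [show shell c p i.succ = p i from Fin.cons_succ _ _ _,
          show shell c q i.succ = q i from Fin.cons_succ _ _ _]
        rfl
      rw [h]; exact abs_comp_le (p - q) i
  have hd : ∀ j : Fin 3, |A.mulVec (shell c p) j.succ - A.mulVec (shell c q) j.succ|
      ≤ (∑ k : Fin 4, |A j.succ k|) * n := by
    intro j
    have h : A.mulVec (shell c p) j.succ - A.mulVec (shell c q) j.succ
        = ∑ k : Fin 4, A j.succ k * (shell c p k - shell c q k) := by
      simp [mulVec, dotProduct, mul_sub, Finset.sum_sub_distrib]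
    rw [h, Finset.sum_mul]
    refine (Finset.abs_sum_le_sum_abs _ _).trans (Finset.sum_le_sum fun k _ => ?_)
    rw [abs_mul]
    exact mul_le_mul_of_nonneg_left (hcomp k) (abs_nonneg _)
  set d := fun j : Fin 3 => A.mulVec (shell c p) j.succ - A.mulVec (shell c q) j.succ with hdd
  have h0 := hd 0; have h1 := hd 1; have h2 := hd 2
  calc norm3 d ≤ |d 0| + |d 1| + |d 2| := norm3_le_sum d
    _ ≤ (∑ j : Fin 3, ∑ k : Fin 4, |A j.succ k|) * n := by
        rw [Fin.sum_univ_three, add_mul, add_mul]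
        exact add_le_add (add_le_add h0 h1) h2

/-- Key inversion lemma: recovering p from the spatial part. -/
lemma key {c : ℝ} (hc : 0 < c) {B : Matrix (Fin 4) (Fin 4) ℝ} (hB : IsLorentz B)
    (p : Fin 3 → ℝ) (hpos : 0 < B.mulVec (shell c p) 0) (j : Fin 3) :
    B⁻¹.mulVec (shell c (fun j => B.mulVec (shell c p) j.succ)) j.succ = p j := by
  rw [← eq_shell_of_pos hc hB p hpos, mulVec_mulVec,
    nonsing_inv_mul _ (isUnit_iff_ne_zero.mpr (det_ne_zero hB)), one_mulVec]
  exact Fin.cons_succ _ _ _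

end LorentzAux

open LorentzAux in
/-- For a Lorentz transformation Λ there is a constant C > 0, depending only on Λ (and c),
such that the spatial parts p̃, q̃ of ΛP, ΛQ satisfy (1/C)|p−q| ≤ |p̃−q̃| ≤ C|p−q|. -/
theorem lorentz_spatial_equivalence (c : ℝ) (hc : 0 < c)
    (Λ : Matrix (Fin 4) (Fin 4) ℝ) (hΛ : IsLorentz Λ) :
    ∃ C > 0, ∀ p q : Fin 3 → ℝ,
      (1 / C) * norm3 (p - q) ≤
        norm3 (fun j => Λ.mulVec (shell c p) j.succ - Λ.mulVec (shell c q) j.succ) ∧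
      norm3 (fun j => Λ.mulVec (shell c p) j.succ - Λ.mulVec (shell c q) j.succ) ≤
        C * norm3 (p - q) := by
  obtain ⟨K₁, hK₁0, hK₁⟩ := upper c hc Λ
  obtain ⟨K₂, hK₂0, hK₂⟩ := upper c hc Λ⁻¹
  obtain ⟨K₃, hK₃0, hK₃⟩ := upper c hc (Tm * Λ)⁻¹
  refine ⟨K₁ + K₂ + K₃ + 1, by linarith, fun p q => ?_⟩
  set C := K₁ + K₂ + K₃ + 1 with hC
  have hCpos : (0:ℝ) < C := by rw [hC]; linarith
  set p' : Fin 3 → ℝ := fun j => Λ.mulVec (shell c p) j.succ with hp'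
  set q' : Fin 3 → ℝ := fun j => Λ.mulVec (shell c q) j.succ with hq'
  -- the lower bound, i.e. norm3 (p - q) ≤ C * norm3 (p' - q')
  have hlow : norm3 (p - q) ≤ C * norm3 (p' - q') := by
    -- sign of the time components
    have hxy : 0 < Λ.mulVec (shell c p) 0 * Λ.mulVec (shell c q) 0 := by
      refine time_sign _ _ hc ?_ ?_ ?_
      · rw [mink_mulVec hΛ]; exact mink_shell_self c p
      · rw [mink_mulVec hΛ]; exact mink_shell_self c q
      · rw [mink_mulVec hΛ]; exact mink_shell_pos hc p q
    rcases lt_or_gt_of_ne (fun h0 : Λ.mulVec (shell c p) 0 = 0 => by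
        rw [h0, zero_mul] at hxy; exact lt_irrefl _ hxy) with hneg | hpos
    · -- time-reversed case: use Tm * Λ
      have hTL : IsLorentz (Tm * Λ) := Tm_lorentz_mul hΛ
      have hps : ∀ r : Fin 3 → ℝ, (fun j : Fin 3 => (Tm * Λ).mulVec (shell c r) j.succ)
          = fun j : Fin 3 => Λ.mulVec (shell c r) j.succ := by
        intro r; funext j
        rw [← mulVec_mulVec, Tm_mulVec_succ]
      have hq0 : Λ.mulVec (shell c q) 0 < 0 := by
        by_contra hcon
        push_neg at hcon
        nlinarith
      have hpp : 0 < (Tm * Λ).mulVec (shell c p) 0 := by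
        rw [← mulVec_mulVec, Tm_mulVec_zero]; linarith
      have hqq : 0 < (Tm * Λ).mulVec (shell c q) 0 := by
        rw [← mulVec_mulVec, Tm_mulVec_zero]; linarith
      have h1 : ∀ j, (Tm * Λ)⁻¹.mulVec (shell c p') j.succ = p j := by
        intro j
        have := key hc hTL p hpp j
        rwa [hps p] at this
      have h2 : ∀ j, (Tm * Λ)⁻¹.mulVec (shell c q') j.succ = q j := by
        intro j
        have := key hc hTL q hqq j
        rwa [hps q] at this
      have heq : (fun j => (Tm * Λ)⁻¹.mulVec (shell c p') j.succ
          - (Tm * Λ)⁻¹.mulVec (shell c q') j.succ) = p - q := by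
        funext j; rw [h1 j, h2 j]; rfl
      have := hK₃ p' q'
      rw [heq] at this
      calc norm3 (p - q) ≤ K₃ * norm3 (p' - q') := this
        _ ≤ C * norm3 (p' - q') := by
            apply mul_le_mul_of_nonneg_right _ (norm3_nonneg _)
            rw [hC]; linarith
    · -- orthochronous case: use Λ itself
      have hq0 : 0 < Λ.mulVec (shell c q) 0 := by
        by_contra hcon
        push_neg at hcon
        nlinarith
      have h1 : ∀ j, Λ⁻¹.mulVec (shell c p') j.succ = p j := fun j => key hc hΛ p hpos j
      have h2 : ∀ j, Λ⁻¹.mulVec (shell c q') j.succ = q j := fun j => key hc hΛ q hq0 j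
      have heq : (fun j => Λ⁻¹.mulVec (shell c p') j.succ
          - Λ⁻¹.mulVec (shell c q') j.succ) = p - q := by
        funext j; rw [h1 j, h2 j]; rfl
      have := hK₂ p' q'
      rw [heq] at this
      calc norm3 (p - q) ≤ K₂ * norm3 (p' - q') := this
        _ ≤ C * norm3 (p' - q') := by
            apply mul_le_mul_of_nonneg_right _ (norm3_nonneg _)
            rw [hC]; linarith
  have hnn : norm3 (fun j => Λ.mulVec (shell c p) j.succ - Λ.mulVec (shell c q) j.succ)
      = norm3 (p' - q') := rfl
  constructor
  · rw [hnn, one_div, inv_mul_le_iff₀ hCpos]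
    exact hlow
  · rw [hnn]
    calc norm3 (p' - q') ≤ K₁ * norm3 (p - q) := hK₁ p q
      _ ≤ C * norm3 (p - q) := by
          apply mul_le_mul_of_nonneg_right _ (norm3_nonneg _)
          rw [hC]; linarith
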